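/- arXiv:2302.09149 — 2 statements merged into one kernel-verified Lean document; each statement's English description precedes it below -/
import Mathlib

section
/- (Eckart–Young, spectral-norm equality) Let A ∈ ℝ^{N×M} have singular value decomposition A = U S Vᵀ with columns u_i of U, v_i of V and singular values s_1 ≥ … ≥ s_d ≥ 0, d = min(N,M), let r = rank(A), and let 0 < t < r. Define the rank-t truncation A_t = Σ_{i=1}^t s_i u_i v_iᵀ. Then ‖A − A_t‖₂ = s_{t+1}. -/
open Matrix

/-- A singular value decomposition of `A`: `U`, `V` orthogonal, `A = U * S * Vᵀ`,
`S` zero off the diagonal with nonincreasing nonnegative diagonal entries. -/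
def IsSVD {N M : ℕ} (A : Matrix (Fin N) (Fin M) ℝ)
    (U : Matrix (Fin N) (Fin N) ℝ) (S : Matrix (Fin N) (Fin M) ℝ)
    (V : Matrix (Fin M) (Fin M) ℝ) : Prop :=
  Uᵀ * U = 1 ∧ Vᵀ * V = 1 ∧ A = U * S * Vᵀ ∧
  (∀ (i : Fin N) (j : Fin M), (i : ℕ) ≠ (j : ℕ) → S i j = 0) ∧
  (∀ (i : Fin N) (j : Fin M), (i : ℕ) = (j : ℕ) → 0 ≤ S i j) ∧
  (∀ (i i' : Fin N) (j j' : Fin M), (i : ℕ) = (j : ℕ) → (i' : ℕ) = (j' : ℕ) →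
    (i : ℕ) ≤ (i' : ℕ) → S i' j' ≤ S i j)

/-- The spectral (ℓ²-operator) norm of a matrix: the operator norm of the induced linear
map between Euclidean spaces. -/
noncomputable def matrixSpectralNorm {N M : ℕ} (A : Matrix (Fin N) (Fin M) ℝ) : ℝ :=
  ‖LinearMap.toContinuousLinearMap (Matrix.toEuclideanLin A)‖

/-- The Frobenius norm of a matrix. -/
noncomputable def frobeniusNorm {N M : ℕ} (A : Matrix (Fin N) (Fin M) ℝ) : ℝ :=
  Real.sqrt (∑ i, ∑ j, |A i j| ^ 2)

/-- The rank-`t` truncated SVD `A_t = ∑_{i=1}^t sᵢ • uᵢ vᵢᵀ` built from the SVD factors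
`U`, `S`, `V`. -/
noncomputable def svdTruncation {N M : ℕ} (U : Matrix (Fin N) (Fin N) ℝ)
    (S : Matrix (Fin N) (Fin M) ℝ) (V : Matrix (Fin M) (Fin M) ℝ)
    (t : ℕ) (ht : t ≤ min N M) : Matrix (Fin N) (Fin M) ℝ :=
  ∑ i : Fin t,
    S ⟨i, lt_of_lt_of_le i.isLt (ht.trans (min_le_left N M))⟩
      ⟨i, lt_of_lt_of_le i.isLt (ht.trans (min_le_right N M))⟩ •
    vecMulVec (fun a => U a ⟨i, lt_of_lt_of_le i.isLt (ht.trans (min_le_left N M))⟩)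
      (fun b => V b ⟨i, lt_of_lt_of_le i.isLt (ht.trans (min_le_right N M))⟩)


lemma norm_euc {n : ℕ} (x : EuclideanSpace ℝ (Fin n)) :
    ‖x‖ = Real.sqrt (x ⬝ᵥ x) := by
  rw [EuclideanSpace.norm_eq]; congr 1; simp [dotProduct, sq_abs, pow_two]

lemma mulVec_norm {n m : ℕ} (B : Matrix (Fin n) (Fin m) ℝ) (x : EuclideanSpace ℝ (Fin m)) :
    ‖toEuclideanLin B x‖ = Real.sqrt ((B *ᵥ x) ⬝ᵥ (B *ᵥ x)) := by
  rw [norm_euc]; rfl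

def Gfun (M : ℕ) (s : ℝ) (y : Fin M → ℝ) : ℕ → ℝ :=
  fun k => if h : k < M then s^2 * (y ⟨k, h⟩)^2 else 0

lemma Gfun_nonneg {M : ℕ} {s : ℝ} {y : Fin M → ℝ} (k : ℕ) : 0 ≤ Gfun M s y k := by
  unfold Gfun; split <;> positivity

lemma Gfun_of_lt {M : ℕ} {s : ℝ} {y : Fin M → ℝ} (k : ℕ) (h : k < M) :
    Gfun M s y k = s^2 * (y ⟨k, h⟩)^2 := by
  unfold Gfun; rw [dif_pos h]

lemma Gfun_of_ge {M : ℕ} {s : ℝ} {y : Fin M → ℝ} (k : ℕ) (h : ¬ k < M) :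
    Gfun M s y k = 0 := by
  unfold Gfun; rw [dif_neg h]

lemma spectralNorm_tail {N M : ℕ} (S : Matrix (Fin N) (Fin M) ℝ)
    (hoff : ∀ (i : Fin N) (j : Fin M), (i:ℕ) ≠ (j:ℕ) → S i j = 0)
    (hpos : ∀ (i : Fin N) (j : Fin M), (i:ℕ) = (j:ℕ) → 0 ≤ S i j)
    (hmono : ∀ (i i' : Fin N) (j j' : Fin M), (i:ℕ) = (j:ℕ) → (i':ℕ) = (j':ℕ) →
      (i:ℕ) ≤ (i':ℕ) → S i' j' ≤ S i j)
    (t : ℕ) (htN : t < N) (htM : t < M) :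
    matrixSpectralNorm (Matrix.of fun i j => if (i:ℕ) < t then 0 else S i j)
      = S ⟨t, htN⟩ ⟨t, htM⟩ := by
  set S' : Matrix (Fin N) (Fin M) ℝ := Matrix.of fun i j => if (i:ℕ) < t then 0 else S i j
    with hS'
  set s : ℝ := S ⟨t, htN⟩ ⟨t, htM⟩ with hs
  have hs0 : 0 ≤ s := hpos _ _ rfl
  -- entry computation
  have he : ∀ (x : Fin M → ℝ) (i : Fin N), (S' *ᵥ x) i =
      if h : (i:ℕ) < M ∧ t ≤ (i:ℕ) then S i ⟨i, h.1⟩ * x ⟨i, h.1⟩ else 0 := by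
    intro x i
    by_cases hit : (i:ℕ) < t
    · have : ∀ j : Fin M, S' i j * x j = 0 := fun j => by
        simp [hS', hit]
      simp only [mulVec, dotProduct]
      rw [dif_neg (by omega), Finset.sum_eq_zero fun j _ => this j]
    · by_cases hiM : (i:ℕ) < M
      · rw [dif_pos ⟨hiM, not_lt.mp hit⟩]
        simp only [mulVec, dotProduct]
        rw [Finset.sum_eq_single ⟨(i:ℕ), hiM⟩]
        · simp [hS', hit]
        · intro j _ hj
          have : (i:ℕ) ≠ (j:ℕ) := fun hc => hj (by ext; simp [← hc])
          simp [hS', hit, hoff i j this]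
        · intro hc; exact absurd (Finset.mem_univ _) hc
      · rw [dif_neg (by omega)]
        simp only [mulVec, dotProduct]
        apply Finset.sum_eq_zero
        intro j _
        have : (i:ℕ) ≠ (j:ℕ) := by omega
        simp [hS', hit, hoff i j this]
  unfold matrixSpectralNorm
  apply le_antisymm
  · refine ContinuousLinearMap.opNorm_le_bound _ hs0 fun x => ?_
    rw [LinearMap.coe_toContinuousLinearMap', mulVec_norm]
    have hxnorm : ‖x‖ = Real.sqrt (∑ j, (x j)^2) := by
      rw [EuclideanSpace.norm_eq]; congr 1; exact Finset.sum_congr rfl fun j _ => by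
        rw [Real.norm_eq_abs, sq_abs]
    rw [hxnorm, ← Real.sqrt_sq hs0, ← Real.sqrt_mul (sq_nonneg s)]
    apply Real.sqrt_le_sqrt
    -- the vector inside
    set y : Fin M → ℝ := (WithLp.equiv 2 (Fin M → ℝ)) x with hy
    have hxy : ∀ j, x j = y j := fun j => rfl
    simp only [dotProduct]
    set G : ℕ → ℝ := Gfun M s y with hG
    calc ∑ i, (S' *ᵥ y) i * (S' *ᵥ y) i
        ≤ ∑ i : Fin N, G (i:ℕ) := by
          apply Finset.sum_le_sum
          intro i _
          rw [he]
          by_cases h : (i:ℕ) < M ∧ t ≤ (i:ℕ)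
          · rw [dif_pos h, hG, Gfun_of_lt _ h.1]
            have h1 : 0 ≤ S i ⟨i, h.1⟩ := hpos _ _ rfl
            have h2 : S i ⟨i, h.1⟩ ≤ s := hmono ⟨t, htN⟩ i ⟨t, htM⟩ ⟨i, h.1⟩ rfl rfl h.2
            have : (S i ⟨i, h.1⟩ * y ⟨i, h.1⟩) * (S i ⟨i, h.1⟩ * y ⟨i, h.1⟩)
                = (S i ⟨i, h.1⟩)^2 * (y ⟨i, h.1⟩)^2 := by ring
            rw [this]
            exact mul_le_mul_of_nonneg_right (pow_le_pow_left₀ h1 h2 2) (sq_nonneg _)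
          · rw [dif_neg h]
            simp only [mul_zero]
            exact Gfun_nonneg _
      _ ≤ s^2 * ∑ j, (x j)^2 := by
          rw [Fin.sum_univ_eq_sum_range G N]
          have step1 : ∑ k ∈ Finset.range N, G k
              ≤ ∑ k ∈ Finset.range (max N M), G k := by
            apply Finset.sum_le_sum_of_subset_of_nonneg
            · exact Finset.range_subset_range.mpr (le_max_left _ _)
            · intro k _ _
              exact Gfun_nonneg _
          have step2 : ∑ k ∈ Finset.range M, G k
              = ∑ k ∈ Finset.range (max N M), G k := by
            apply Finset.sum_subset (Finset.range_subset_range.mpr (le_max_right _ _))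
            intro k _ hk
            exact Gfun_of_ge _ (by simpa using hk)
          refine (step1.trans_eq step2.symm).trans_eq ?_
          rw [← Fin.sum_univ_eq_sum_range G M, Finset.mul_sum]
          apply Finset.sum_congr rfl
          intro j _
          rw [hG, Gfun_of_lt _ j.isLt, Fin.eta]
          rfl
  · have key : ‖(LinearMap.toContinuousLinearMap (toEuclideanLin S'))
        (EuclideanSpace.single ⟨t, htM⟩ (1:ℝ))‖ = s := by
      rw [LinearMap.coe_toContinuousLinearMap', mulVec_norm]
      have hveq : S' *ᵥ (EuclideanSpace.single ⟨t, htM⟩ (1:ℝ))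
          = fun i => S' i ⟨t, htM⟩ * 1 := mulVec_single S' ⟨t, htM⟩ 1
      rw [hveq]
      have : ∑ i, (S' i ⟨t, htM⟩ * 1) * (S' i ⟨t, htM⟩ * 1) = s * s := by
        rw [Finset.sum_eq_single ⟨t, htN⟩]
        · simp [hS', hs]
        · intro i _ hi
          have : (i:ℕ) ≠ t := fun hc => hi (by ext; simp [hc])
          by_cases hit : (i:ℕ) < t
          · simp [hS', hit]
          · simp [hS', hit, hoff i ⟨t, htM⟩ (by simpa using this)]
        · intro hc; exact absurd (Finset.mem_univ _) hc
      simp only [dotProduct]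
      rw [this, Real.sqrt_mul_self hs0]
    have hbound := (LinearMap.toContinuousLinearMap (toEuclideanLin S')).le_opNorm
        (EuclideanSpace.single ⟨t, htM⟩ (1:ℝ))
    rw [key, EuclideanSpace.norm_single, norm_one, mul_one] at hbound
    exact hbound

lemma isometry_norm {n m : ℕ} (W : Matrix (Fin n) (Fin n) ℝ) (hW : Wᵀ * W = 1)
    (B : Matrix (Fin n) (Fin m) ℝ) (x : EuclideanSpace ℝ (Fin m)) :
    ‖toEuclideanLin (W * B) x‖ = ‖toEuclideanLin B x‖ := by
  rw [mulVec_norm, mulVec_norm, ← mulVec_mulVec, dotProduct_mulVec, vecMul_mulVec, hW, vecMul_one]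

lemma opNorm_eq_of_norm_eq {E F G : Type*} [NormedAddCommGroup E] [NormedAddCommGroup F]
    [NormedAddCommGroup G] [NormedSpace ℝ E] [NormedSpace ℝ F] [NormedSpace ℝ G]
    (f : E →L[ℝ] F) (g : E →L[ℝ] G) (h : ∀ x, ‖f x‖ = ‖g x‖) : ‖f‖ = ‖g‖ := by
  apply le_antisymm
  · exact f.opNorm_le_bound (norm_nonneg g) fun x => (h x).le.trans (g.le_opNorm x)
  · exact g.opNorm_le_bound (norm_nonneg f) fun x => (h x).symm.le.trans (f.le_opNorm x)

lemma toEuclideanLin_mul_apply {n m k : ℕ} (A : Matrix (Fin n) (Fin m) ℝ)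
    (B : Matrix (Fin m) (Fin k) ℝ) (x : EuclideanSpace ℝ (Fin k)) :
    toEuclideanLin (A * B) x = toEuclideanLin A (toEuclideanLin B x) := by
  simp only [toEuclideanLin_apply, ← mulVec_mulVec, Equiv.apply_symm_apply]

lemma norm_toEuclideanLin_isometric {n : ℕ} (W : Matrix (Fin n) (Fin n) ℝ)
    (hW : Wᵀ * W = 1) (x : EuclideanSpace ℝ (Fin n)) :
    ‖toEuclideanLin W x‖ = ‖x‖ := by
  have := isometry_norm W hW 1 x
  rw [mul_one] at this
  rw [this, norm_euc, norm_euc]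
  congr 1
  simp [toEuclideanLin_apply]

lemma spectralNorm_mul_left {n m : ℕ} (W : Matrix (Fin n) (Fin n) ℝ) (hW : Wᵀ * W = 1)
    (B : Matrix (Fin n) (Fin m) ℝ) : matrixSpectralNorm (W * B) = matrixSpectralNorm B :=
  opNorm_eq_of_norm_eq _ _ fun x => isometry_norm W hW B x

lemma spectralNorm_mul_right {n m : ℕ} (B : Matrix (Fin n) (Fin m) ℝ)
    (W : Matrix (Fin m) (Fin m) ℝ) (hW : Wᵀ * W = 1) :
    matrixSpectralNorm (B * W) = matrixSpectralNorm B := by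
  unfold matrixSpectralNorm
  have hW' : W * Wᵀ = 1 := by
    rw [mul_eq_one_comm] at hW; exact hW
  have hWt : Wᵀᵀ * Wᵀ = 1 := by rw [transpose_transpose]; exact hW'
  apply le_antisymm
  · refine ContinuousLinearMap.opNorm_le_bound
      (LinearMap.toContinuousLinearMap (toEuclideanLin (B * W)))
      (norm_nonneg (LinearMap.toContinuousLinearMap (toEuclideanLin B))) fun x => ?_
    rw [LinearMap.coe_toContinuousLinearMap', toEuclideanLin_mul_apply,
      ← norm_toEuclideanLin_isometric W hW x]
    exact (LinearMap.toContinuousLinearMap (toEuclideanLin B)).le_opNorm _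
  · refine ContinuousLinearMap.opNorm_le_bound
      (LinearMap.toContinuousLinearMap (toEuclideanLin B))
      (norm_nonneg (LinearMap.toContinuousLinearMap (toEuclideanLin (B * W)))) fun x => ?_
    have hBW : B * W * Wᵀ = B := by rw [Matrix.mul_assoc, hW', Matrix.mul_one]
    have key : toEuclideanLin B x = toEuclideanLin (B * W) (toEuclideanLin Wᵀ x) := by
      rw [← toEuclideanLin_mul_apply, hBW]
    rw [LinearMap.coe_toContinuousLinearMap', key,
      ← norm_toEuclideanLin_isometric Wᵀ hWt x]
    exact (LinearMap.toContinuousLinearMap (toEuclideanLin (B * W))).le_opNorm _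

lemma truncation_eq {N M : ℕ} (U : Matrix (Fin N) (Fin N) ℝ)
    (S : Matrix (Fin N) (Fin M) ℝ) (V : Matrix (Fin M) (Fin M) ℝ)
    (hoff : ∀ (i : Fin N) (j : Fin M), (i:ℕ) ≠ (j:ℕ) → S i j = 0)
    (t : ℕ) (ht' : t ≤ min N M) (htN : t < N) (htM : t < M) :
    U * (S - Matrix.of fun (i : Fin N) (j : Fin M) => if (i:ℕ) < t then 0 else S i j) * Vᵀ
      = svdTruncation U S V t ht' := by
  set D : Matrix (Fin N) (Fin M) ℝ :=
    S - Matrix.of fun (i : Fin N) (j : Fin M) => if (i:ℕ) < t then 0 else S i j with hD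
  have hDval : ∀ (i : Fin N) (j : Fin M), D i j = if (i:ℕ) < t then S i j else 0 := by
    intro i j
    rw [hD]
    by_cases h : (i:ℕ) < t <;> simp [Matrix.sub_apply, h]
  ext a b
  -- define F : ℕ → ℝ
  set F : ℕ → ℝ := fun k => if hM : k < M then
      (if hN : k < N then (if k < t then U a ⟨k, hN⟩ * S ⟨k, hN⟩ ⟨k, hM⟩ else 0) else 0)
        * V b ⟨k, hM⟩ else 0 with hF
  have inner : ∀ j : Fin M, (∑ k, U a k * D k j)
      = if hN : (j:ℕ) < N then (if (j:ℕ) < t then U a ⟨j, hN⟩ * S ⟨j, hN⟩ j else 0) else 0 := by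
    intro j
    by_cases hjt : (j:ℕ) < t
    · have hjN : (j:ℕ) < N := hjt.trans htN
      rw [dif_pos hjN, if_pos hjt, Finset.sum_eq_single ⟨(j:ℕ), hjN⟩]
      · rw [hDval, if_pos hjt]
      · intro k _ hk
        have hkj : (k:ℕ) ≠ (j:ℕ) := fun hc => hk (by ext; simpa using hc)
        rw [hDval]
        by_cases h : (k:ℕ) < t
        · rw [if_pos h, hoff k j hkj, mul_zero]
        · rw [if_neg h, mul_zero]
      · intro hc; exact absurd (Finset.mem_univ _) hc
    · have hz : ∀ k : Fin N, U a k * D k j = 0 := by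
        intro k
        rw [hDval]
        by_cases h : (k:ℕ) < t
        · rw [if_pos h, hoff k j (by omega), mul_zero]
        · rw [if_neg h, mul_zero]
      rw [Finset.sum_eq_zero fun k _ => hz k]
      by_cases hjN : (j:ℕ) < N
      · rw [dif_pos hjN, if_neg hjt]
      · rw [dif_neg hjN]
  have lhs_eq : (U * D * Vᵀ) a b = ∑ j : Fin M, F (j:ℕ) := by
    simp only [Matrix.mul_apply, transpose_apply]
    refine Finset.sum_congr rfl fun j _ => ?_
    rw [hF]
    simp only [Matrix.mul_apply]
    rw [inner j]
    simp only [dif_pos j.isLt, Fin.eta]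
  have rhs_eq : svdTruncation U S V t ht' a b = ∑ i : Fin t, F (i:ℕ) := by
    unfold svdTruncation
    rw [Matrix.sum_apply]
    refine Finset.sum_congr rfl fun i _ => ?_
    have hiN : (i:ℕ) < N := i.isLt.trans_le (ht'.trans (min_le_left N M))
    have hiM : (i:ℕ) < M := i.isLt.trans_le (ht'.trans (min_le_right N M))
    rw [hF]
    simp only [Matrix.smul_apply, vecMulVec_apply, dif_pos hiM, dif_pos hiN, if_pos i.isLt,
      smul_eq_mul]
    ring
  rw [lhs_eq, rhs_eq, Fin.sum_univ_eq_sum_range F M, Fin.sum_univ_eq_sum_range F t]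
  symm
  apply Finset.sum_subset (Finset.range_subset_range.mpr (htM.le))
  intro k _ hk
  have hkt : ¬ k < t := by simpa using hk
  simp only [hF]
  by_cases hM : k < M
  · rw [dif_pos hM]
    by_cases hN : k < N
    · rw [dif_pos hN, if_neg hkt, zero_mul]
    · rw [dif_neg hN, zero_mul]
  · rw [dif_neg hM]

/-- Eckart–Young, spectral-norm equality: for `0 < t < rank A` the
rank-`t` truncated SVD satisfies `‖A − A_t‖₂ = s_{t+1}`. -/
theorem eckart_young_spectral {N M : ℕ}
    (A : Matrix (Fin N) (Fin M) ℝ) (U : Matrix (Fin N) (Fin N) ℝ)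
    (S : Matrix (Fin N) (Fin M) ℝ) (V : Matrix (Fin M) (Fin M) ℝ)
    (h : IsSVD A U S V) (t : ℕ) (ht0 : 0 < t) (htr : t < A.rank) (ht : t < min N M) :
    matrixSpectralNorm (A - svdTruncation U S V t ht.le) =
      S ⟨t, lt_of_lt_of_le ht (min_le_left N M)⟩ ⟨t, lt_of_lt_of_le ht (min_le_right N M)⟩ := by
  obtain ⟨hU, hV, hA, hoff, hpos, hmono⟩ := h
  have htN : t < N := lt_of_lt_of_le ht (min_le_left N M)
  have htM : t < M := lt_of_lt_of_le ht (min_le_right N M)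
  set S' : Matrix (Fin N) (Fin M) ℝ :=
    Matrix.of fun (i : Fin N) (j : Fin M) => if (i:ℕ) < t then 0 else S i j with hS'
  have htr' : svdTruncation U S V t ht.le = U * (S - S') * Vᵀ :=
    (truncation_eq U S V hoff t ht.le htN htM).symm
  have hdiff : A - svdTruncation U S V t ht.le = U * (S' * Vᵀ) := by
    rw [hA, htr', ← Matrix.sub_mul, ← Matrix.mul_sub, sub_sub_cancel, Matrix.mul_assoc]
  have hVt : Vᵀᵀ * Vᵀ = 1 := by
    rw [transpose_transpose]; exact mul_eq_one_comm.mp hV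
  rw [hdiff, spectralNorm_mul_left U hU (S' * Vᵀ), spectralNorm_mul_right S' Vᵀ hVt, hS']
  exact spectralNorm_tail S hoff hpos hmono t htN htM
end

section
/- (Correctness of the incremental SVD column update) Let U ∈ ℝ^{n×k} and V ∈ ℝ^{m×k} have orthonormal columns, let S ∈ ℝ^{k×k} be diagonal, set A = U S Vᵀ, and let B ∈ ℝ^{n×b} be a block of new columns. Define M = UᵀB, P = B − U M, let P̃ ∈ ℝ^{n×b} have orthonormal columns whose span contains the column space of P (so P = P̃ P̃ᵀ P), and set T = P̃ᵀ P. Then the augmented matrix satisfies the exact block factorization [A B] = [U P̃] · [[S, M], [0, T]] · [[V, 0], [0, I_b]]ᵀ. -/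
open Matrix

/-- Correctness of the incremental SVD column update: with `A = U S Vᵀ`
(`U`, `V` having orthonormal columns, `S` diagonal), new columns `B`, `M = Uᵀ B`,
residual `P = B − U M`, `P̃` with orthonormal columns whose span contains the column space
of `P` (so `P = P̃ P̃ᵀ P`) and `T = P̃ᵀ P`, the augmented matrix satisfies the exact block
factorization `[A B] = [U P̃] · [[S, M], [0, T]] · [[V, 0], [0, I]]ᵀ`. -/
theorem itSVD_block_factorization {n m k b : ℕ}
    (U : Matrix (Fin n) (Fin k) ℝ) (V : Matrix (Fin m) (Fin k) ℝ)
    (S : Matrix (Fin k) (Fin k) ℝ) (hS : S.IsDiag)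
    (hU : Uᵀ * U = 1) (hV : Vᵀ * V = 1)
    (A : Matrix (Fin n) (Fin m) ℝ) (hA : A = U * S * Vᵀ)
    (B : Matrix (Fin n) (Fin b) ℝ)
    (M : Matrix (Fin k) (Fin b) ℝ) (hM : M = Uᵀ * B)
    (P : Matrix (Fin n) (Fin b) ℝ) (hP : P = B - U * M)
    (Pt : Matrix (Fin n) (Fin b) ℝ) (hPt : Ptᵀ * Pt = 1)
    (hspan : P = Pt * Ptᵀ * P)
    (T : Matrix (Fin b) (Fin b) ℝ) (hT : T = Ptᵀ * P) :
    fromCols A B =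
      fromCols U Pt * fromBlocks S M 0 T *
        (fromBlocks V 0 0 (1 : Matrix (Fin b) (Fin b) ℝ))ᵀ := by
  have hB : Pt * T = B - U * M := by
    rw [hT, ← Matrix.mul_assoc, ← hspan, ← hP]
  rw [Matrix.fromBlocks_transpose, Matrix.transpose_zero, Matrix.transpose_one,
    Matrix.fromCols_mul_fromBlocks, Matrix.fromCols_mul_fromBlocks]
  simp [hA, hB, Matrix.mul_assoc]
end
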